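/- For every integer C ≥ 2 and every C-uniform hypergraph H with at least one edge and maximum degree at most k, there exists a k-regular C-uniform hypergraph H' containing H (as a subhypergraph on a superset of the vertices) whose maximum codegree equals the maximum codegree of H. -/

import Mathlib

open scoped Classical

namespace Stmt13Aux

lemma natCast_injOn_lt {q a b : ℕ} (ha : a < q) (hb : b < q)
    (h : (a : ZMod q) = (b : ZMod q)) : a = b := by
  haveI : NeZero q := ⟨by omega⟩
  have := congrArg ZMod.val h
  rwa [ZMod.val_cast_of_lt ha, ZMod.val_cast_of_lt hb] at this

variable {V : Type} [Fintype V] [DecidableEq V]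

/-- Embedding of `V` into the grid `V × ZMod q × Fin C` at row `r`, layer `i`. -/
def emb (q C : ℕ) (r : ZMod q) (i : Fin C) : V ↪ V × ZMod q × Fin C :=
  ⟨fun v => (v, r, i), fun x y h => congrArg Prod.fst h⟩

/-- A "diagonal" edge in column `a`, starting row `r`, slope `t`. -/
def diag (q C : ℕ) (a : V) (r : ZMod q) (t : ℕ) : Finset (V × ZMod q × Fin C) :=
  Finset.univ.image (fun i : Fin C => (a, r + (t : ZMod q) * ((i : ℕ) : ZMod q), i))

/-- Copies of the hypergraph `E`, one in each row/layer. -/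
noncomputable def copies (q C : ℕ) [NeZero q] (E : Multiset (Finset V)) :
    Multiset (Finset (V × ZMod q × Fin C)) :=
  ∑ p : ZMod q × Fin C, E.map (fun e => e.image (emb q C p.1 p.2))

/-- All diagonal edges: for each column `a` and row `r`, slopes `0, …, def a - 1`. -/
noncomputable def diags (q C k : ℕ) [NeZero q] (E : Multiset (Finset V)) :
    Multiset (Finset (V × ZMod q × Fin C)) :=
  ∑ a : V, ∑ r : ZMod q, ∑ t ∈ Finset.range (k - E.countP (fun e => a ∈ e)),
    ({diag q C a r t} : Multiset (Finset (V × ZMod q × Fin C)))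

lemma mem_image_emb {q C : ℕ} (r : ZMod q) (i : Fin C) (e : Finset V)
    (w : V × ZMod q × Fin C) :
    w ∈ e.image (emb q C r i) ↔ w.1 ∈ e ∧ w.2.1 = r ∧ w.2.2 = i := by
  obtain ⟨a, s, j⟩ := w
  have hemb : ∀ v : V, emb q C r i v = (v, r, i) := fun _ => rfl
  simp only [Finset.mem_image, hemb, Prod.mk.injEq]
  aesop

lemma mem_diag {q C : ℕ} (a : V) (r : ZMod q) (t : ℕ) (w : V × ZMod q × Fin C) :
    w ∈ diag q C a r t ↔ w.1 = a ∧ w.2.1 = r + (t : ZMod q) * ((w.2.2 : ℕ) : ZMod q) := by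
  obtain ⟨b, s, j⟩ := w
  simp only [diag, Finset.mem_image, Finset.mem_univ, true_and, Prod.mk.injEq]
  aesop

lemma card_diag {q C : ℕ} (a : V) (r : ZMod q) (t : ℕ) :
    (diag q C a r t).card = C := by
  rw [diag, Finset.card_image_of_injective _ (fun i j h => ?_), Finset.card_univ,
    Fintype.card_fin]
  exact congrArg (fun w : V × ZMod q × Fin C => w.2.2) h

lemma mem_diags {q C k : ℕ} [NeZero q] (E : Multiset (Finset V))
    (e : Finset (V × ZMod q × Fin C)) :
    e ∈ diags q C k E ↔ ∃ (a : V) (r : ZMod q) (t : ℕ),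
      t < k - E.countP (fun e => a ∈ e) ∧ e = diag q C a r t := by
  simp only [diags, Multiset.mem_sum, Finset.mem_univ, true_and, Finset.mem_range,
    Multiset.mem_singleton]

lemma countP_sum {α β : Type*} (s : Finset β) (f : β → Multiset α) (p : α → Prop)
    [DecidablePred p] :
    Multiset.countP p (∑ b ∈ s, f b) = ∑ b ∈ s, Multiset.countP p (f b) := by
  classical
  induction s using Finset.induction_on with
  | empty => simp
  | insert _ _ h ih => rw [Finset.sum_insert h, Finset.sum_insert h, Multiset.countP_add, ih]

lemma countP_singleton {α : Type*} (p : α → Prop) [DecidablePred p] (a : α) :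
    Multiset.countP p ({a} : Multiset α) = if p a then 1 else 0 := by
  rw [show ({a} : Multiset α) = a ::ₘ 0 from rfl, Multiset.countP_cons, Multiset.countP_zero]
  simp [add_comm]

/-- Degree of a point in the copies: the original degree of its first coordinate. -/
lemma countP_copies {q C : ℕ} [NeZero q] (E : Multiset (Finset V))
    (w : V × ZMod q × Fin C) :
    (copies q C E).countP (fun e => w ∈ e) = E.countP (fun e => w.1 ∈ e) := by
  rw [copies, countP_sum, Finset.sum_eq_single w.2]
  · rw [Multiset.countP_map, ← Multiset.countP_eq_card_filter]
    apply Multiset.countP_congr rfl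
    intro e _
    simp only [mem_image_emb, eq_iff_iff]
    tauto
  · intro p _ hp
    rw [Multiset.countP_map, ← Multiset.countP_eq_card_filter, Multiset.countP_eq_zero]
    intro e _ hmem
    rw [mem_image_emb] at hmem
    exact hp ((Prod.ext hmem.2.1 hmem.2.2).symm)
  · intro h; exact absurd (Finset.mem_univ _) h

/-- Codegree of a pair in the copies. -/
lemma countP2_copies {q C : ℕ} [NeZero q] (E : Multiset (Finset V))
    (w1 w2 : V × ZMod q × Fin C) :
    (copies q C E).countP (fun e => w1 ∈ e ∧ w2 ∈ e) =
      if w1.2 = w2.2 then E.countP (fun e => w1.1 ∈ e ∧ w2.1 ∈ e) else 0 := by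
  rw [copies, countP_sum]
  by_cases h : w1.2 = w2.2
  · rw [if_pos h, Finset.sum_eq_single w1.2]
    · rw [Multiset.countP_map, ← Multiset.countP_eq_card_filter]
      apply Multiset.countP_congr rfl
      intro e _
      simp only [mem_image_emb, eq_iff_iff]
      rw [← h]
      tauto
    · intro p _ hp
      rw [Multiset.countP_map, ← Multiset.countP_eq_card_filter, Multiset.countP_eq_zero]
      intro e _ hmem
      rw [mem_image_emb, mem_image_emb] at hmem
      exact hp ((Prod.ext hmem.1.2.1 hmem.1.2.2).symm)
    · intro h; exact absurd (Finset.mem_univ _) h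
  · rw [if_neg h]
    apply Finset.sum_eq_zero
    intro p _
    rw [Multiset.countP_map, ← Multiset.countP_eq_card_filter, Multiset.countP_eq_zero]
    intro e _ hmem
    rw [mem_image_emb, mem_image_emb] at hmem
    apply h
    exact Prod.ext (hmem.1.2.1.trans hmem.2.2.1.symm) (hmem.1.2.2.trans hmem.2.2.2.symm)

/-- Degree of a point in the diagonals: its deficiency. -/
lemma countP_diags {q C k : ℕ} [NeZero q] (E : Multiset (Finset V))
    (w : V × ZMod q × Fin C) :
    (diags q C k E).countP (fun e => w ∈ e) = k - E.countP (fun e => w.1 ∈ e) := by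
  obtain ⟨a, r, i⟩ := w
  rw [diags, countP_sum, Finset.sum_eq_single a]
  · rw [countP_sum]
    simp only [countP_sum]
    rw [Finset.sum_comm]
    have hterm : ∀ (t : ℕ) (r' : ZMod q),
        Multiset.countP (fun e => ((a, r, i) : V × ZMod q × Fin C) ∈ e)
            ({diag q C a r' t} : Multiset _)
          = if r' = r - (t : ZMod q) * ((i : ℕ) : ZMod q) then 1 else 0 := by
      intro t r'
      rw [countP_singleton]
      congr 1
      rw [mem_diag]
      simp only [true_and, eq_iff_iff]
      constructor
      · intro h; rw [h]; ring
      · intro h; rw [h]; ring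
    have hinner : ∀ t ∈ Finset.range (k - E.countP fun e => a ∈ e),
        (∑ r' : ZMod q,
          Multiset.countP (fun e => ((a, r, i) : V × ZMod q × Fin C) ∈ e)
            ({diag q C a r' t} : Multiset _)) = 1 := by
      intro t _
      rw [Finset.sum_congr rfl (fun r' _ => hterm t r'),
        Finset.sum_ite_eq' Finset.univ _ (fun _ => 1)]
      simp
    rw [Finset.sum_congr rfl hinner, Finset.sum_const, Finset.card_range, smul_eq_mul,
      mul_one]
  · intro b _ hb
    rw [countP_sum]
    apply Finset.sum_eq_zero
    intro r' _
    rw [countP_sum]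
    apply Finset.sum_eq_zero
    intro t _
    rw [countP_singleton, if_neg]
    rw [mem_diag]
    rintro ⟨h1, -⟩
    exact hb h1.symm
  · intro h; exact absurd (Finset.mem_univ _) h

/-- Codegree of a pair with the same row and layer in the diagonals is `0`. -/
lemma countP2_diags_same {q C k : ℕ} [NeZero q] (E : Multiset (Finset V))
    (w1 w2 : V × ZMod q × Fin C) (hne : w1 ≠ w2) (h2 : w1.2 = w2.2) :
    (diags q C k E).countP (fun e => w1 ∈ e ∧ w2 ∈ e) = 0 := by
  rw [Multiset.countP_eq_zero]
  intro e he hmem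
  obtain ⟨a, r, t, -, rfl⟩ := (mem_diags E e).mp he
  simp only [mem_diag] at hmem
  obtain ⟨⟨ha1, -⟩, ⟨ha2, -⟩⟩ := hmem
  exact hne (Prod.ext (ha1.trans ha2.symm) h2)

/-- Codegree of any pair in the diagonals is at most `1`. -/
lemma countP2_diags_le_one {q C k : ℕ} [NeZero q] (hqp : q.Prime) (hkq : k < q) (hCq : C < q)
    (E : Multiset (Finset V)) (w1 w2 : V × ZMod q × Fin C) (hne : w1 ≠ w2) :
    (diags q C k E).countP (fun e => w1 ∈ e ∧ w2 ∈ e) ≤ 1 := by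
  haveI : Fact q.Prime := ⟨hqp⟩
  by_cases ha : w1.1 = w2.1
  swap
  · rw [Multiset.countP_eq_zero.mpr]
    · exact Nat.zero_le 1
    intro e he hmem
    obtain ⟨a, r, t, -, rfl⟩ := (mem_diags E e).mp he
    simp only [mem_diag] at hmem
    exact ha (hmem.1.1.trans hmem.2.1.symm)
  by_cases hi : w1.2.2 = w2.2.2
  · have h2 : w1.2 ≠ w2.2 := fun h => hne (Prod.ext ha h)
    rw [Multiset.countP_eq_zero.mpr]
    · exact Nat.zero_le 1
    intro e he hmem
    obtain ⟨a, r, t, -, rfl⟩ := (mem_diags E e).mp he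
    simp only [mem_diag] at hmem
    apply h2
    apply Prod.ext _ hi
    rw [hmem.1.2, hmem.2.2, hi]
  -- main case: same column, different layers
  set a0 := w1.1 with ha0
  set d := k - E.countP (fun e => a0 ∈ e) with hd
  have hc : ((w1.2.2 : ℕ) : ZMod q) ≠ ((w2.2.2 : ℕ) : ZMod q) := by
    intro h
    exact hi (Fin.ext (natCast_injOn_lt (lt_trans w1.2.2.isLt hCq)
      (lt_trans w2.2.2.isLt hCq) h))
  rw [diags, countP_sum, Finset.sum_eq_single a0]
  · have hrw : (Multiset.countP (fun e => w1 ∈ e ∧ w2 ∈ e)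
        (∑ r : ZMod q, ∑ t ∈ Finset.range d, ({diag q C a0 r t} : Multiset _))) =
        ∑ x ∈ (Finset.univ : Finset (ZMod q)) ×ˢ Finset.range d,
          if w1 ∈ diag q C a0 x.1 x.2 ∧ w2 ∈ diag q C a0 x.1 x.2 then 1 else 0 := by
      rw [countP_sum, Finset.sum_product]
      apply Finset.sum_congr rfl
      intro r _
      rw [countP_sum]
      apply Finset.sum_congr rfl
      intro t _
      exact countP_singleton _ _
    rw [hrw, Finset.sum_boole]
    rw [Nat.cast_id]
    apply Finset.card_le_one.mpr
    rintro ⟨r, t⟩ hx ⟨r', t'⟩ hy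
    rw [Finset.mem_filter] at hx hy
    obtain ⟨hxm, hx1, hx2⟩ := hx
    obtain ⟨hym, hy1, hy2⟩ := hy
    have htd : t < d := Finset.mem_range.mp (Finset.mem_product.mp hxm).2
    have htd' : t' < d := Finset.mem_range.mp (Finset.mem_product.mp hym).2
    rw [mem_diag] at hx1 hx2 hy1 hy2
    -- extract equations
    have e1 : w1.2.1 = r + (t : ZMod q) * ((w1.2.2 : ℕ) : ZMod q) := hx1.2
    have e2 : w2.2.1 = r + (t : ZMod q) * ((w2.2.2 : ℕ) : ZMod q) := hx2.2
    have e1' : w1.2.1 = r' + (t' : ZMod q) * ((w1.2.2 : ℕ) : ZMod q) := hy1.2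
    have e2' : w2.2.1 = r' + (t' : ZMod q) * ((w2.2.2 : ℕ) : ZMod q) := hy2.2
    have key : (t : ZMod q) * (((w1.2.2 : ℕ) : ZMod q) - ((w2.2.2 : ℕ) : ZMod q)) =
        (t' : ZMod q) * (((w1.2.2 : ℕ) : ZMod q) - ((w2.2.2 : ℕ) : ZMod q)) := by
      have l1 : w1.2.1 - w2.2.1 =
          (t : ZMod q) * (((w1.2.2 : ℕ) : ZMod q) - ((w2.2.2 : ℕ) : ZMod q)) := by
        rw [e1, e2]; ring
      have l2 : w1.2.1 - w2.2.1 =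
          (t' : ZMod q) * (((w1.2.2 : ℕ) : ZMod q) - ((w2.2.2 : ℕ) : ZMod q)) := by
        rw [e1', e2']; ring
      rw [← l1, ← l2]
    have htt : (t : ZMod q) = (t' : ZMod q) :=
      mul_right_cancel₀ (sub_ne_zero.mpr hc) key
    have htq : t < q := by omega
    have htq' : t' < q := by omega
    have ht : t = t' := natCast_injOn_lt htq htq' htt
    have hr : r = r' := by
      have hsum : r + (t : ZMod q) * ((w1.2.2 : ℕ) : ZMod q) =
          r' + (t' : ZMod q) * ((w1.2.2 : ℕ) : ZMod q) := e1.symm.trans e1'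
      rw [← htt] at hsum
      exact add_right_cancel hsum
    exact Prod.ext hr ht
  · intro b _ hb
    rw [countP_sum]
    apply Finset.sum_eq_zero
    intro r' _
    rw [countP_sum]
    apply Finset.sum_eq_zero
    intro t _
    rw [countP_singleton, if_neg]
    rw [mem_diag, mem_diag]
    rintro ⟨⟨h1, -⟩, -⟩
    exact hb (h1.symm.trans ha0.symm)
  · intro h; exact absurd (Finset.mem_univ _) h

end Stmt13Aux

/-- Hypergraph regularization: for every `C ≥ 2` and every `C`-uniform hypergraph `H`
(with a multiset of edges) having at least one edge and maximum degree at most `k`,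
there is a `k`-regular `C`-uniform hypergraph `H'` containing `H` (via an embedding of
the vertices, the image of the edge multiset of `H` being contained in that of `H'`)
whose maximum codegree equals the maximum codegree of `H`. -/
theorem stmt13 (C k : ℕ) (hC : 2 ≤ C) (hk : 0 < k)
    (V : Type) [Fintype V] [DecidableEq V] (E : Multiset (Finset V))
    (hE : E ≠ 0) (huniform : ∀ e ∈ E, e.card = C)
    (hdeg : ∀ v : V, E.countP (fun e => v ∈ e) ≤ k) :
    ∃ (N : ℕ) (ι : V ↪ Fin N) (E' : Multiset (Finset (Fin N))),
      (∀ e ∈ E', e.card = C) ∧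
      (∀ v : Fin N, E'.countP (fun e => v ∈ e) = k) ∧
      E.map (fun e => e.image ι) ≤ E' ∧
      (Finset.univ.filter (fun p : Fin N × Fin N => p.1 ≠ p.2)).sup
          (fun p => E'.countP (fun e => p.1 ∈ e ∧ p.2 ∈ e))
        = (Finset.univ.filter (fun p : V × V => p.1 ≠ p.2)).sup
            (fun p => E.countP (fun e => p.1 ∈ e ∧ p.2 ∈ e)) := by
  classical
  obtain ⟨q, hqle, hqp⟩ := Nat.exists_infinite_primes (max k C + 1)
  haveI : Fact q.Prime := ⟨hqp⟩
  haveI : NeZero q := ⟨hqp.ne_zero⟩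
  have hkq : k < q := by
    have := le_max_left k C; omega
  have hCq : C < q := by
    have := le_max_right k C; omega
  have hC0 : 0 < C := by omega
  set i0 : Fin C := ⟨0, hC0⟩ with hi0
  set EW : Multiset (Finset (V × ZMod q × Fin C)) :=
    Stmt13Aux.copies q C E + Stmt13Aux.diags q C k E with hEWdef
  set σ : (V × ZMod q × Fin C) ≃ Fin (Fintype.card (V × ZMod q × Fin C)) :=
    Fintype.equivFin _ with hσdef
  set ι : V ↪ Fin (Fintype.card (V × ZMod q × Fin C)) :=
    (Stmt13Aux.emb q C 0 i0).trans σ.toEmbedding with hιdef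
  refine ⟨Fintype.card (V × ZMod q × Fin C), ι, EW.map (fun s => s.map σ.toEmbedding),
    ?_, ?_, ?_, ?_⟩
  -- uniformity
  · intro e' he'
    obtain ⟨s, hs, rfl⟩ := Multiset.mem_map.mp he'
    rw [Finset.card_map]
    rw [hEWdef, Multiset.mem_add] at hs
    rcases hs with hs | hs
    · rw [Stmt13Aux.copies, Multiset.mem_sum] at hs
      obtain ⟨p, -, hs⟩ := hs
      obtain ⟨e0, he0, rfl⟩ := Multiset.mem_map.mp hs
      rw [Finset.card_image_of_injective _ (Stmt13Aux.emb q C p.1 p.2).injective]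
      exact huniform e0 he0
    · obtain ⟨a, r, t, -, rfl⟩ := (Stmt13Aux.mem_diags E _).mp hs
      exact Stmt13Aux.card_diag a r t
  -- regularity
  · intro v
    rw [Multiset.countP_map, ← Multiset.countP_eq_card_filter]
    have hcong : ∀ s ∈ EW,
        ((v ∈ s.map σ.toEmbedding ∧ True) = (σ.symm v ∈ s)) := by
      intro s _
      simp [Finset.mem_map_equiv]
    have : EW.countP (fun s => v ∈ s.map σ.toEmbedding) =
        EW.countP (fun s => σ.symm v ∈ s) := by
      apply Multiset.countP_congr rfl
      intro s _
      simp [Finset.mem_map_equiv]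
    rw [this, hEWdef, Multiset.countP_add, Stmt13Aux.countP_copies,
      Stmt13Aux.countP_diags]
    have := hdeg (σ.symm v).1
    omega
  -- containment
  · have h00 : E.map (fun e => e.image (Stmt13Aux.emb q C (0 : ZMod q) i0)) ≤ EW := by
      rw [hEWdef]
      refine le_trans ?_ (Multiset.le_add_right _ _)
      rw [Stmt13Aux.copies]
      exact Finset.single_le_sum
        (f := fun p : ZMod q × Fin C => E.map (fun e => e.image (Stmt13Aux.emb q C p.1 p.2)))
        (fun _ _ => Multiset.zero_le _) (Finset.mem_univ ((0 : ZMod q), i0))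
    have heq : E.map (fun e => e.image ι) =
        E.map ((fun s => s.map σ.toEmbedding) ∘
          (fun e => e.image (Stmt13Aux.emb q C (0 : ZMod q) i0))) := by
      apply Multiset.map_congr rfl
      intro e _
      simp only [Function.comp_apply]
      rw [Finset.map_eq_image, Finset.image_image]
      rfl
    rw [heq, ← Multiset.map_map]
    exact Multiset.map_le_map h00
  -- codegree
  · have key : ∀ (w1 w2 : V × ZMod q × Fin C) (s : Finset (V × ZMod q × Fin C)),
        ((σ w1 ∈ s.map σ.toEmbedding ∧ σ w2 ∈ s.map σ.toEmbedding) = (w1 ∈ s ∧ w2 ∈ s)) := by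
      intro w1 w2 s
      simp [Finset.mem_map_equiv]
    have hcnt : ∀ w1 w2 : V × ZMod q × Fin C,
        (EW.map (fun s => s.map σ.toEmbedding)).countP
            (fun e => σ w1 ∈ e ∧ σ w2 ∈ e) =
          EW.countP (fun e => w1 ∈ e ∧ w2 ∈ e) := by
      intro w1 w2
      rw [Multiset.countP_map, ← Multiset.countP_eq_card_filter]
      apply Multiset.countP_congr rfl
      intro s _
      exact key w1 w2 s
    apply le_antisymm
    · apply Finset.sup_le
      rintro ⟨p1, p2⟩ hp
      have hpne : p1 ≠ p2 := (Finset.mem_filter.mp hp).2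
      set w1 := σ.symm p1 with hw1
      set w2 := σ.symm p2 with hw2
      have hwne : w1 ≠ w2 := fun h => hpne (by
        have := congrArg σ h
        simpa [hw1, hw2] using this)
      have hp1 : p1 = σ w1 := by rw [hw1, Equiv.apply_symm_apply]
      have hp2 : p2 = σ w2 := by rw [hw2, Equiv.apply_symm_apply]
      rw [hp1, hp2, hcnt w1 w2, hEWdef, Multiset.countP_add]
      by_cases hsame : w1.2 = w2.2
      · rw [Stmt13Aux.countP2_copies, if_pos hsame,
          Stmt13Aux.countP2_diags_same E w1 w2 hwne hsame, add_zero]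
        have hane : w1.1 ≠ w2.1 := fun h => hwne (Prod.ext h hsame)
        exact Finset.le_sup (f := fun p : V × V => E.countP (fun e => p.1 ∈ e ∧ p.2 ∈ e))
          (Finset.mem_filter.mpr ⟨Finset.mem_univ (w1.1, w2.1), hane⟩)
      · rw [Stmt13Aux.countP2_copies, if_neg hsame, zero_add]
        have hle1 := Stmt13Aux.countP2_diags_le_one hqp hkq hCq E w1 w2 hwne
        -- max codegree of E is at least 1
        obtain ⟨e, he⟩ := Multiset.exists_mem_of_ne_zero hE
        have hcard : 1 < e.card := by rw [huniform e he]; omega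
        obtain ⟨x, hx, y, hy, hxy⟩ := Finset.one_lt_card.mp hcard
        have h1le : 1 ≤ E.countP (fun e' => x ∈ e' ∧ y ∈ e') :=
          Multiset.countP_pos.mpr ⟨e, he, hx, hy⟩
        calc Multiset.countP (fun e => w1 ∈ e ∧ w2 ∈ e) (Stmt13Aux.diags q C k E) ≤ 1 := hle1
          _ ≤ E.countP (fun e' => x ∈ e' ∧ y ∈ e') := h1le
          _ ≤ _ := Finset.le_sup (f := fun p : V × V => E.countP (fun e => p.1 ∈ e ∧ p.2 ∈ e))
              (Finset.mem_filter.mpr ⟨Finset.mem_univ (x, y), hxy⟩)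
    · apply Finset.sup_le
      rintro ⟨x, y⟩ hp
      have hxy : x ≠ y := (Finset.mem_filter.mp hp).2
      set w1 : V × ZMod q × Fin C := (x, 0, i0) with hw1
      set w2 : V × ZMod q × Fin C := (y, 0, i0) with hw2
      have hιx : ι x = σ w1 := rfl
      have hιy : ι y = σ w2 := rfl
      have hne' : ι x ≠ ι y := fun h => hxy (ι.injective h)
      have hgoal : E.countP (fun e => x ∈ e ∧ y ∈ e) ≤
          (EW.map (fun s => s.map σ.toEmbedding)).countP
            (fun e => ι x ∈ e ∧ ι y ∈ e) := by
        rw [hιx, hιy, hcnt w1 w2, hEWdef, Multiset.countP_add]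
        have hcop : (Stmt13Aux.copies q C E).countP (fun e => w1 ∈ e ∧ w2 ∈ e) =
            E.countP (fun e => x ∈ e ∧ y ∈ e) := by
          rw [Stmt13Aux.countP2_copies, if_pos rfl]
        omega
      exact le_trans hgoal
        (Finset.le_sup
          (f := fun p : Fin (Fintype.card (V × ZMod q × Fin C)) × Fin (Fintype.card (V × ZMod q × Fin C)) =>
            (EW.map (fun s => s.map σ.toEmbedding)).countP (fun e => p.1 ∈ e ∧ p.2 ∈ e))
          (Finset.mem_filter.mpr ⟨Finset.mem_univ (ι x, ι y), hne'⟩))
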